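/- Let L : ℝ^p → ℝ be twice continuously differentiable with positive semidefinite Hessian ∇²L(θ) at every θ ∈ ℝ^p, let θ̂ ∈ ℝ^p satisfy ∇L(θ̂) = 0, and let r, τ₁ > 0. Suppose that ⟨∇L(θ₁) − ∇L(θ₂), θ₁ − θ₂⟩ ≥ 2τ₁‖θ₁ − θ₂‖₂² for all θ₁, θ₂ in the closed ball of radius r around θ̂. If θ ∈ ℝ^p satisfies ‖∇L(θ)‖₂ < 2τ₁ r, then ‖θ − θ̂‖₂ ≤ r. -/

import Mathlib

open scoped RealInnerProductSpace

/-- if the gradient of a convex (PSD-Hessian) `C²` function is monotone with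
parameter `2τ₁` on the ball of radius `r` around a critical point `θ̂`, then any point whose
gradient is smaller than `2τ₁ r` in norm must lie in that ball. -/
theorem stmt_6 {p : ℕ} (L : EuclideanSpace ℝ (Fin p) → ℝ) (hC2 : ContDiff ℝ 2 L)
    (H : EuclideanSpace ℝ (Fin p) → (EuclideanSpace ℝ (Fin p) →L[ℝ] EuclideanSpace ℝ (Fin p)))
    (hH : ∀ x, HasFDerivAt (gradient L) (H x) x)
    (hpsd : ∀ (x u : EuclideanSpace ℝ (Fin p)), 0 ≤ ⟪u, H x u⟫)
    (θhat : EuclideanSpace ℝ (Fin p)) (hcrit : gradient L θhat = 0)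
    (r τ₁ : ℝ) (hr : 0 < r) (hτ₁ : 0 < τ₁)
    (hmono : ∀ θ₁ θ₂ : EuclideanSpace ℝ (Fin p), ‖θ₁ - θhat‖ ≤ r → ‖θ₂ - θhat‖ ≤ r →
      2 * τ₁ * ‖θ₁ - θ₂‖ ^ 2 ≤ ⟪gradient L θ₁ - gradient L θ₂, θ₁ - θ₂⟫)
    (θ : EuclideanSpace ℝ (Fin p)) (hθ : ‖gradient L θ‖ < 2 * τ₁ * r) :
    ‖θ - θhat‖ ≤ r := by
  by_contra hcon
  push_neg at hcon
  set v : EuclideanSpace ℝ (Fin p) := θ - θhat with hv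
  have hvpos : (0:ℝ) < ‖v‖ := lt_trans hr hcon
  set f : ℝ → ℝ := fun t => ⟪v, gradient L (θhat + t • v)⟫ with hf
  have hderiv : ∀ t : ℝ, HasDerivAt f ⟪v, H (θhat + t • v) v⟫ t := by
    intro t
    have hc : HasDerivAt (fun t : ℝ => θhat + t • v) v t := by
      simpa using ((hasDerivAt_id t).smul_const v).const_add θhat
    have h1 : HasDerivAt (fun t : ℝ => gradient L (θhat + t • v))
        (H (θhat + t • v) v) t := (hH _).comp_hasDerivAt t hc
    have h2 := ((innerSL ℝ v).hasFDerivAt.comp_hasDerivAt t h1)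
    exact h2
  have hfmono : Monotone f :=
    monotone_of_deriv_nonneg (fun t => (hderiv t).differentiableAt)
      (fun t => by rw [(hderiv t).deriv]; exact hpsd _ v)
  set s : ℝ := r / ‖v‖ with hs
  have hspos : 0 < s := div_pos hr hvpos
  have hs1 : s ≤ 1 := le_of_lt ((div_lt_one hvpos).2 hcon)
  have hnorm : ‖s • v‖ = r := by
    rw [norm_smul, Real.norm_eq_abs, abs_of_pos hspos, hs, div_mul_cancel₀]
    exact ne_of_gt hvpos
  have hkey := hmono (θhat + s • v) θhat (by simpa using hnorm.le) (by simpa using hr.le)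
  rw [hcrit, sub_zero] at hkey
  have hsimp : ⟪gradient L (θhat + s • v), θhat + s • v - θhat⟫ = s * f s := by
    rw [show θhat + s • v - θhat = s • v by abel, real_inner_smul_right,
      real_inner_comm]
  rw [hsimp] at hkey
  have hkey2 : 2 * τ₁ * r * ‖v‖ ≤ f s := by
    have h1 : 2 * τ₁ * r ^ 2 ≤ s * f s := by
      calc 2 * τ₁ * r ^ 2 = 2 * τ₁ * ‖θhat + s • v - θhat‖ ^ 2 := by
            rw [show θhat + s • v - θhat = s • v by abel, hnorm]
        _ ≤ s * f s := hkey
    have : 2 * τ₁ * r * ‖v‖ * s ≤ f s * s := by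
      calc 2 * τ₁ * r * ‖v‖ * s = 2 * τ₁ * r ^ 2 := by
            rw [hs]; field_simp
        _ ≤ s * f s := h1
        _ = f s * s := mul_comm _ _
    exact le_of_mul_le_mul_right this hspos
  have hf1 : f 1 < 2 * τ₁ * r * ‖v‖ := by
    have : f 1 = ⟪v, gradient L θ⟫ := by
      rw [hf]; simp [hv]
    rw [this]
    calc ⟪v, gradient L θ⟫ ≤ ‖v‖ * ‖gradient L θ‖ := real_inner_le_norm _ _
      _ < ‖v‖ * (2 * τ₁ * r) := by
          exact mul_lt_mul_of_pos_left hθ hvpos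
      _ = 2 * τ₁ * r * ‖v‖ := mul_comm _ _
  exact absurd (hkey2.trans (hfmono hs1)) (not_le.2 hf1)
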